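/- arXiv:1707.00477 — 2 statements merged into one kernel-verified Lean document; each statement's English description precedes it below -/
import Mathlib

section
/- For every integer d ≥ −2 there exist a constant C > 0 and an integer n₀ such that for every even integer n ≥ n₀, every one-factorization of K_n has a set S of k ≤ C·log n vertices (for some k) with deficit D(S) ≥ k + d. -/
open Finset

/-- A (not necessarily proper) coloring of the edges of `K_n` with the colors `{1, …, n-1}`
(modeled as `Fin (n-1)`).  The values on diagonal elements of `Sym2 (Fin n)` are irrelevant. -/
def EdgeColoring (n : ℕ) : Type := Sym2 (Fin n) → Fin (n - 1)

/-- `aCount C u μ` is the number of `μ`-colored edges of `C` incident with the vertex `u`. -/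
def aCount {n : ℕ} (C : EdgeColoring n) (u : Fin n) (μ : Fin (n - 1)) : ℕ :=
  (Finset.univ.filter (fun v : Fin n => v ≠ u ∧ C s(u, v) = μ)).card

/-- `Phi C = Σ_{u,μ} a_{u,μ}(C)²`. -/
def Phi {n : ℕ} (C : EdgeColoring n) : ℕ :=
  ∑ u : Fin n, ∑ μ : Fin (n - 1), (aCount C u μ) ^ 2

/-- `Psi C` is the number of unordered pairs of distinct incident edges of `K_n` receiving the
same color under `C` (counted as ordered pairs and divided by two). -/
def Psi {n : ℕ} (C : EdgeColoring n) : ℕ :=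
  ((Finset.univ : Finset (Sym2 (Fin n) × Sym2 (Fin n))).filter
    (fun p => ¬ p.1.IsDiag ∧ ¬ p.2.IsDiag ∧ p.1 ≠ p.2 ∧
      (∃ x : Fin n, x ∈ p.1 ∧ x ∈ p.2) ∧ C p.1 = C p.2)).card / 2

/-- `C'` differs from `C` on exactly one edge. -/
def DiffersOnOneEdge {n : ℕ} (C C' : EdgeColoring n) : Prop :=
  ∃ e : Sym2 (Fin n), ¬ e.IsDiag ∧ C' e ≠ C e ∧
    ∀ f : Sym2 (Fin n), ¬ f.IsDiag → f ≠ e → C' f = C f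

/-- A coloring is locally optimal if no single-edge recoloring decreases `Psi`. -/
def LocallyOptimal {n : ℕ} (C : EdgeColoring n) : Prop :=
  ∀ C' : EdgeColoring n, DiffersOnOneEdge C C' → Psi C ≤ Psi C'

/-- A one-factorization: a proper edge coloring of `K_n` with the `n-1` colors. -/
def IsOneFactorization {n : ℕ} (C : EdgeColoring n) : Prop :=
  ∀ e f : Sym2 (Fin n), ¬ e.IsDiag → ¬ f.IsDiag → e ≠ f →
    (∃ x : Fin n, x ∈ e ∧ x ∈ f) → C e ≠ C f

/-- The graph formed by the `μ`-colored edges of `C`. -/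
def monoGraph {n : ℕ} (C : EdgeColoring n) (μ : Fin (n - 1)) : SimpleGraph (Fin n) where
  Adj x y := x ≠ y ∧ C s(x, y) = μ
  symm := ⟨fun x y h => ⟨h.1.symm, by rw [Sym2.eq_swap]; exact h.2⟩⟩
  loopless := ⟨fun x h => h.1 rfl⟩

/-- An IV coloring: for every color `μ`, every connected component of the graph formed by the
`μ`-colored edges is either a single edge or a path with exactly two edges. -/
def IsIVColoring {n : ℕ} (C : EdgeColoring n) : Prop :=
  ∀ μ : Fin (n - 1), ∀ x : Fin n, (∃ y, (monoGraph C μ).Adj x y) →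
    (∃ u v : Fin n, (monoGraph C μ).Adj u v ∧
        {w | (monoGraph C μ).Reachable x w} = {u, v}) ∨
    (∃ u v w : Fin n, (monoGraph C μ).Adj u v ∧ (monoGraph C μ).Adj v w ∧
        u ≠ w ∧ ¬ (monoGraph C μ).Adj u w ∧
        {t | (monoGraph C μ).Reachable x t} = {u, v, w})

/-- `C'` is obtained from `C` by a `(u,v)`-flip. -/
def IsFlip {n : ℕ} (C C' : EdgeColoring n) (u v : Fin n) : Prop :=
  C' s(u, v) = C s(u, v) ∧
  (∀ e : Sym2 (Fin n), ¬ e.IsDiag → u ∉ e → v ∉ e → C' e = C e) ∧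
  ∀ w : Fin n, w ≠ u → w ≠ v →
    ((C' s(w, u) = C s(w, u) ∧ C' s(w, v) = C s(w, v)) ∨
     (C' s(w, u) = C s(w, v) ∧ C' s(w, v) = C s(w, u)))

/-- The edges of `K_n` with both endpoints in `S`. -/
def edgesIn {n : ℕ} (S : Finset (Fin n)) : Finset (Sym2 (Fin n)) :=
  Finset.univ.filter (fun e => ¬ e.IsDiag ∧ ∀ x : Fin n, x ∈ e → x ∈ S)

/-- `gammaColors C S`: the number of distinct colors on edges with both endpoints in `S`. -/
def gammaColors {n : ℕ} (C : EdgeColoring n) (S : Finset (Fin n)) : ℕ :=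
  ((edgesIn S).image C).card

/-- The deficit `D(S) = C(|S|, 2) - γ(S)`. -/
def deficit {n : ℕ} (C : EdgeColoring n) (S : Finset (Fin n)) : ℤ :=
  (Nat.choose S.card 2 : ℤ) - gammaColors C S

noncomputable section

namespace DefPf

open Finset

open scoped Classical

variable {n : ℕ}

/-- Working adjacency relation: edge colored with a color in `M`. -/
def Adj (X : EdgeColoring n) (M : Finset (Fin (n - 1))) (x y : Fin n) : Prop :=
  x ≠ y ∧ X s(x, y) ∈ M

lemma Adj.symm {X : EdgeColoring n} {M : Finset (Fin (n - 1))} {x y : Fin n}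
    (h : Adj X M x y) : Adj X M y x := by
  refine ⟨h.1.symm, ?_⟩
  rw [Sym2.eq_swap]
  exact h.2

/-- The `M`-colored edges inside `S`. -/
def EG (X : EdgeColoring n) (M : Finset (Fin (n - 1))) (S : Finset (Fin n)) :
    Finset (Sym2 (Fin n)) := (edgesIn S).filter (fun e => X e ∈ M)

lemma mem_edgesIn {S : Finset (Fin n)} {a b : Fin n} (hab : a ≠ b) (ha : a ∈ S) (hb : b ∈ S) :
    s(a, b) ∈ edgesIn S := by
  unfold edgesIn
  rw [Finset.mem_filter]
  refine ⟨Finset.mem_univ _, ?_, ?_⟩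
  · rw [Sym2.mk_isDiag_iff]; exact hab
  · intro x hx
    rcases Sym2.mem_iff.1 hx with rfl | rfl <;> assumption

lemma mem_EG {X : EdgeColoring n} {M : Finset (Fin (n - 1))} {S : Finset (Fin n)} {a b : Fin n}
    (h : Adj X M a b) (ha : a ∈ S) (hb : b ∈ S) : s(a, b) ∈ EG X M S := by
  unfold EG
  rw [Finset.mem_filter]
  exact ⟨mem_edgesIn h.1 ha hb, h.2⟩

lemma not_mem_edgesIn {S : Finset (Fin n)} {e : Sym2 (Fin n)} {a : Fin n}
    (hae : a ∈ e) (haS : a ∉ S) : e ∉ edgesIn S := by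
  unfold edgesIn
  rw [Finset.mem_filter]
  rintro ⟨-, -, h⟩
  exact haS (h a hae)

lemma not_mem_EG {X : EdgeColoring n} {M : Finset (Fin (n - 1))} {S : Finset (Fin n)}
    {e : Sym2 (Fin n)} {a : Fin n} (hae : a ∈ e) (haS : a ∉ S) : e ∉ EG X M S := by
  unfold EG
  rw [Finset.mem_filter]
  rintro ⟨h, -⟩
  exact not_mem_edgesIn hae haS h

lemma edgesIn_mono {S T : Finset (Fin n)} (h : S ⊆ T) : edgesIn S ⊆ edgesIn T := by
  intro e he
  unfold edgesIn at he ⊢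
  rw [Finset.mem_filter] at he ⊢
  exact ⟨he.1, he.2.1, fun x hx => h (he.2.2 x hx)⟩

lemma EG_mono {X : EdgeColoring n} {M : Finset (Fin (n - 1))} {S T : Finset (Fin n)}
    (h : S ⊆ T) : EG X M S ⊆ EG X M T := by
  unfold EG
  exact Finset.filter_subset_filter _ (edgesIn_mono h)

/-- In a proper coloring every vertex sees each color at most once. -/
lemma color_inj {X : EdgeColoring n} (h1f : IsOneFactorization X) {v u u' : Fin n}
    (hu : u ≠ v) (hu' : u' ≠ v) (hX : X s(v, u) = X s(v, u')) : u = u' := by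
  by_contra hne
  refine h1f s(v, u) s(v, u') ?_ ?_ ?_ ?_ hX
  · rw [Sym2.mk_isDiag_iff]; exact fun h => hu h.symm
  · rw [Sym2.mk_isDiag_iff]; exact fun h => hu' h.symm
  · intro h
    rcases Sym2.eq_iff.1 h with ⟨-, h2⟩ | ⟨h1, h2⟩
    · exact hne h2
    · exact hu' h1.symm
  · exact ⟨v, Sym2.mem_mk_left _ _, Sym2.mem_mk_left _ _⟩

/-- Minimum degree in the `M`-union graph is at least `M.card`. -/
lemma deg_ge {X : EdgeColoring n} (h1f : IsOneFactorization X) (M : Finset (Fin (n - 1)))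
    (v : Fin n) : M.card ≤ (univ.filter (fun u => Adj X M v u)).card := by
  classical
  have hinj : Set.InjOn (fun u => X s(v, u)) ↑(univ.erase v) := by
    intro a ha b hb hXab
    have ha' : a ≠ v := (Finset.mem_erase.1 ha).1
    have hb' : b ≠ v := (Finset.mem_erase.1 hb).1
    exact color_inj h1f ha' hb' hXab
  have hcard : ((univ.erase v).image (fun u => X s(v, u))).card = n - 1 := by
    rw [Finset.card_image_of_injOn hinj, Finset.card_erase_of_mem (Finset.mem_univ v),
      Finset.card_univ, Fintype.card_fin]
  have himg : (univ.erase v).image (fun u => X s(v, u)) = (univ : Finset (Fin (n - 1))) := by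
    apply Finset.eq_univ_of_card
    rw [hcard, Fintype.card_fin]
  -- for each color `c` choose a partner
  have hex : ∀ c : Fin (n - 1), ∃ u, u ∈ univ.erase v ∧ X s(v, u) = c := by
    intro c
    have : c ∈ (univ.erase v).image (fun u => X s(v, u)) := by rw [himg]; exact mem_univ c
    rcases Finset.mem_image.1 this with ⟨u, hu, hXu⟩
    exact ⟨u, hu, hXu⟩
  set f : Fin (n - 1) → Fin n := fun c => (hex c).choose with hf
  apply Finset.card_le_card_of_injOn f
  · intro c hc
    rcases (hex c).choose_spec with ⟨hmem, hcol⟩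
    rw [Finset.mem_coe, Finset.mem_filter]
    refine ⟨Finset.mem_univ _, ?_, ?_⟩
    · exact fun h => (Finset.mem_erase.1 hmem).1 h.symm
    · rw [hcol]; exact hc
  · intro c1 h1 c2 h2 hfe
    have e1 := (hex c1).choose_spec.2
    have e2 := (hex c2).choose_spec.2
    rw [← e1, ← e2]
    show X s(v, f c1) = X s(v, f c2)
    rw [hfe]

/-- Ordered-pairs double counting: pairs mapping onto a set of edges inside `S`. -/
lemma two_mul_card_edges (S : Finset (Fin n)) (E : Finset (Sym2 (Fin n)))
    (hE : E ⊆ edgesIn S) :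
    ((S ×ˢ S).filter (fun p => s(p.1, p.2) ∈ E)).card = 2 * E.card := by
  classical
  rw [Finset.card_eq_sum_card_fiberwise
    (s := (S ×ˢ S).filter (fun p => s(p.1, p.2) ∈ E))
    (f := fun p : Fin n × Fin n => s(p.1, p.2)) (t := E)
    (fun p hp => (Finset.mem_filter.1 (Finset.mem_coe.1 hp)).2)]
  have h2 : ∀ e ∈ E,
      (((S ×ˢ S).filter (fun p => s(p.1, p.2) ∈ E)).filter
        (fun p : Fin n × Fin n => s(p.1, p.2) = e)).card = 2 := by
    intro e he
    have heIn := hE he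
    unfold edgesIn at heIn
    rw [Finset.mem_filter] at heIn
    obtain ⟨-, hnd, hmem⟩ := heIn
    induction e using Sym2.ind with
    | _ a b =>
      have hab : a ≠ b := by rw [Sym2.mk_isDiag_iff] at hnd; exact hnd
      have haS : a ∈ S := hmem a (Sym2.mem_mk_left _ _)
      have hbS : b ∈ S := hmem b (Sym2.mem_mk_right _ _)
      have : (((S ×ˢ S).filter (fun p => s(p.1, p.2) ∈ E)).filter
          (fun p : Fin n × Fin n => s(p.1, p.2) = s(a, b))) = {(a, b), (b, a)} := by
        ext ⟨u, w⟩
        simp only [Finset.mem_filter, Finset.mem_product, Finset.mem_insert,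
          Finset.mem_singleton, Prod.mk.injEq]
        constructor
        · rintro ⟨⟨-, -⟩, heq⟩
          rcases Sym2.eq_iff.1 heq with ⟨h1, h2⟩ | ⟨h1, h2⟩
          · exact Or.inl ⟨h1, h2⟩
          · exact Or.inr ⟨h1, h2⟩
        · rintro (⟨rfl, rfl⟩ | ⟨rfl, rfl⟩)
          · exact ⟨⟨⟨haS, hbS⟩, he⟩, rfl⟩
          · refine ⟨⟨⟨hbS, haS⟩, ?_⟩, Sym2.eq_swap⟩
            rw [Sym2.eq_swap]; exact he
      rw [this]
      rw [Finset.card_insert_of_notMem, Finset.card_singleton]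
      rw [Finset.mem_singleton]
      intro hcon
      rw [Prod.mk.injEq] at hcon
      exact hab hcon.1
  rw [Finset.sum_congr rfl h2, Finset.sum_const, smul_eq_mul, mul_comm]

lemma edges_card_le (S : Finset (Fin n)) : (edgesIn S).card ≤ Nat.choose S.card 2 := by
  classical
  have h2 := two_mul_card_edges S (edgesIn S) (Finset.Subset.refl _)
  have hsub : (S ×ˢ S).filter (fun p => s(p.1, p.2) ∈ edgesIn S) ⊆ S.offDiag := by
    intro p hp
    rw [Finset.mem_filter] at hp
    obtain ⟨hpr, hpe⟩ := hp
    rw [Finset.mem_product] at hpr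
    unfold edgesIn at hpe
    rw [Finset.mem_filter] at hpe
    rw [Finset.mem_offDiag]
    refine ⟨hpr.1, hpr.2, ?_⟩
    intro hcon
    exact hpe.2.1 (by rw [Sym2.mk_isDiag_iff]; exact hcon)
  have hle : 2 * (edgesIn S).card ≤ S.card * S.card - S.card := by
    rw [← h2, ← Finset.offDiag_card]
    exact Finset.card_le_card hsub
  rw [Nat.choose_two_right]
  have hid : S.card * S.card - S.card = S.card * (S.card - 1) := by
    rcases S.card with _ | k
    · simp
    · simp [Nat.succ_sub_one, Nat.mul_comm]
      ring_nf
      omega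
  rw [hid] at hle
  omega

/-- Color-count bound: at most `M.card` colors from `M` plus one color per non-`M` edge. -/
lemma gamma_bound (X : EdgeColoring n) (M : Finset (Fin (n - 1))) (S : Finset (Fin n)) :
    gammaColors X S + (EG X M S).card ≤ M.card + (edgesIn S).card := by
  classical
  have hsplit : (EG X M S).card + ((edgesIn S).filter (fun e => X e ∉ M)).card
      = (edgesIn S).card := by
    unfold EG
    exact Finset.card_filter_add_card_filter_not _
  have himg : (edgesIn S).image X ⊆
      ((EG X M S).image X) ∪ (((edgesIn S).filter (fun e => X e ∉ M)).image X) := by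
    intro c hc
    rcases Finset.mem_image.1 hc with ⟨e, he, rfl⟩
    by_cases hM : X e ∈ M
    · exact Finset.mem_union_left _ (Finset.mem_image_of_mem X
        (by unfold EG; rw [Finset.mem_filter]; exact ⟨he, hM⟩))
    · exact Finset.mem_union_right _ (Finset.mem_image_of_mem X
        (by rw [Finset.mem_filter]; exact ⟨he, hM⟩))
  have h1 : gammaColors X S ≤ ((EG X M S).image X).card
      + (((edgesIn S).filter (fun e => X e ∉ M)).image X).card := by
    unfold gammaColors
    exact le_trans (Finset.card_le_card himg) (Finset.card_union_le _ _)
  have h2 : ((EG X M S).image X).card ≤ M.card := by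
    apply Finset.card_le_card
    intro c hc
    rcases Finset.mem_image.1 hc with ⟨e, he, rfl⟩
    unfold EG at he
    exact (Finset.mem_filter.1 he).2
  have h3 : (((edgesIn S).filter (fun e => X e ∉ M)).image X).card
      ≤ ((edgesIn S).filter (fun e => X e ∉ M)).card := Finset.card_image_le
  omega

/-- From many `M`-edges inside `S` to a deficit lower bound. -/
lemma deficit_from_EG {X : EdgeColoring n} {M : Finset (Fin (n - 1))} {S : Finset (Fin n)}
    {t : ℕ} (hM : M.card = 3) (hE : S.card + t ≤ (EG X M S).card) :
    (S.card : ℤ) + t - 3 ≤ deficit X S := by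
  have h1 := gamma_bound X M S
  have h2 := edges_card_le S
  have h3 : (EG X M S).card ≤ (edgesIn S).card := by
    unfold EG; exact Finset.card_filter_le _ _
  unfold deficit
  rw [hM] at h1
  omega

/-- Handshake bound for a closed set in the `M`-union graph. -/
lemma closed_handshake (X : EdgeColoring n) (M : Finset (Fin (n - 1))) (S : Finset (Fin n))
    (hdeg : ∀ v : Fin n, 3 ≤ (univ.filter (fun u => Adj X M v u)).card)
    (hcl : ∀ a b : Fin n, a ∈ S → Adj X M a b → b ∈ S) :
    3 * S.card ≤ 2 * (EG X M S).card := by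
  classical
  set T := (S ×ˢ S).filter (fun p => s(p.1, p.2) ∈ EG X M S) with hT
  have h2 : T.card = 2 * (EG X M S).card := by
    rw [hT]
    exact two_mul_card_edges S _ (Finset.filter_subset _ _)
  have hbu : S.biUnion (fun v => ({v} : Finset (Fin n)) ×ˢ (univ.filter (fun u => Adj X M v u)))
      ⊆ T := by
    intro p hp
    rcases Finset.mem_biUnion.1 hp with ⟨v, hv, hpv⟩
    rw [Finset.mem_product, Finset.mem_singleton] at hpv
    obtain ⟨hp1, hp2⟩ := hpv
    have hadj : Adj X M v p.2 := (Finset.mem_filter.1 hp2).2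
    have hp2S : p.2 ∈ S := hcl v p.2 hv hadj
    rw [hT, Finset.mem_filter, Finset.mem_product]
    subst hp1
    exact ⟨⟨hv, hp2S⟩, mem_EG hadj hv hp2S⟩
  have hdisj : ∀ x ∈ S, ∀ y ∈ S, x ≠ y →
      Disjoint (({x} : Finset (Fin n)) ×ˢ (univ.filter (fun u => Adj X M x u)))
        (({y} : Finset (Fin n)) ×ˢ (univ.filter (fun u => Adj X M y u))) := by
    intro x _ y _ hxy
    rw [Finset.disjoint_left]
    intro p hp hq
    rw [Finset.mem_product, Finset.mem_singleton] at hp hq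
    exact hxy (hp.1.symm.trans hq.1)
  have hcard : (S.biUnion (fun v => ({v} : Finset (Fin n)) ×ˢ
      (univ.filter (fun u => Adj X M v u)))).card
      = ∑ v ∈ S, (({v} : Finset (Fin n)) ×ˢ (univ.filter (fun u => Adj X M v u))).card :=
    Finset.card_biUnion hdisj
  have hsum : 3 * S.card ≤ ∑ v ∈ S, (({v} : Finset (Fin n)) ×ˢ
      (univ.filter (fun u => Adj X M v u))).card := by
    have : ∀ v ∈ S, 3 ≤ (({v} : Finset (Fin n)) ×ˢ
        (univ.filter (fun u => Adj X M v u))).card := by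
      intro v _
      rw [Finset.card_product, Finset.card_singleton, one_mul]
      exact hdeg v
    calc 3 * S.card = S.card • 3 := by rw [smul_eq_mul, mul_comm]
    _ ≤ _ := Finset.card_nsmul_le_sum S _ 3 this
  have := Finset.card_le_card hbu
  omega

/-- BFS balls from `S` in the `M`-union graph. -/
def ball (X : EdgeColoring n) (M : Finset (Fin (n - 1))) (S : Finset (Fin n)) : ℕ → Finset (Fin n)
  | 0 => S
  | r + 1 => ball X M S r ∪ univ.filter (fun v => ∃ u ∈ ball X M S r, Adj X M u v)

variable {X : EdgeColoring n} {M : Finset (Fin (n - 1))} {S : Finset (Fin n)}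

lemma ball_zero : ball X M S 0 = S := rfl

lemma ball_succ (r : ℕ) : ball X M S (r + 1)
    = ball X M S r ∪ univ.filter (fun v => ∃ u ∈ ball X M S r, Adj X M u v) := rfl

lemma ball_mono {r r' : ℕ} (h : r ≤ r') : ball X M S r ⊆ ball X M S r' := by
  induction r' with
  | zero => rw [Nat.le_zero] at h; subst h; exact Finset.Subset.refl _
  | succ m ih =>
    rcases Nat.lt_or_ge r (m + 1) with hlt | hge
    · exact Finset.Subset.trans (ih (by omega)) (by rw [ball_succ]; exact Finset.subset_union_left)
    · have : r = m + 1 := by omega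
      subst this; exact Finset.Subset.refl _

lemma mem_ball_succ_of_adj {r : ℕ} {u v : Fin n} (hu : u ∈ ball X M S r)
    (huv : Adj X M u v) : v ∈ ball X M S (r + 1) := by
  rw [ball_succ]
  exact Finset.mem_union_right _ (Finset.mem_filter.2 ⟨Finset.mem_univ _, u, hu, huv⟩)

/-- Rank: first radius at which a vertex is explored. -/
def rk (X : EdgeColoring n) (M : Finset (Fin (n - 1))) (S : Finset (Fin n)) (v : Fin n) : ℕ :=
  if h : ∃ r, v ∈ ball X M S r then Nat.find h else 0

lemma mem_ball_rk {v : Fin n} (h : ∃ r, v ∈ ball X M S r) : v ∈ ball X M S (rk X M S v) := by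
  unfold rk
  rw [dif_pos h]
  exact Nat.find_spec h

lemma rk_le {v : Fin n} {r : ℕ} (h : v ∈ ball X M S r) : rk X M S v ≤ r := by
  unfold rk
  rw [dif_pos ⟨r, h⟩]
  exact Nat.find_min' _ h

lemma rk_pos {v : Fin n} (h : ∃ r, v ∈ ball X M S r) (hv : v ∉ S) : 1 ≤ rk X M S v := by
  by_contra hcon
  have h0 : rk X M S v = 0 := by omega
  have := mem_ball_rk h
  rw [h0, ball_zero] at this
  exact hv this

lemma not_mem_ball_of_lt_rk {v : Fin n} {r : ℕ} (h : r < rk X M S v) : v ∉ ball X M S r :=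
  fun hc => absurd (rk_le hc) (by omega)

/-- Parent in the BFS forest. -/
def pr (X : EdgeColoring n) (M : Finset (Fin (n - 1))) (S : Finset (Fin n)) (v : Fin n) : Fin n :=
  if v ∈ S then v
  else if h : ∃ u, u ∈ ball X M S (rk X M S v - 1) ∧ Adj X M u v then h.choose else v

lemma pr_mem_self {v : Fin n} (hv : v ∈ S) : pr X M S v = v := by
  unfold pr; rw [if_pos hv]

lemma pr_spec {v : Fin n} (h : ∃ r, v ∈ ball X M S r) (hv : v ∉ S) :
    pr X M S v ∈ ball X M S (rk X M S v - 1) ∧ Adj X M (pr X M S v) v ∧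
      rk X M S (pr X M S v) < rk X M S v := by
  have h1 : 1 ≤ rk X M S v := rk_pos h hv
  have hmem : v ∈ ball X M S (rk X M S v) := mem_ball_rk h
  have hnot : v ∉ ball X M S (rk X M S v - 1) := not_mem_ball_of_lt_rk (by omega)
  have hstep : v ∈ ball X M S (rk X M S v - 1 + 1) := by
    rwa [Nat.sub_add_cancel h1]
  rw [ball_succ, Finset.mem_union] at hstep
  rcases hstep with hc | hc
  · exact absurd hc hnot
  · rw [Finset.mem_filter] at hc
    obtain ⟨-, u, hu, huv⟩ := hc
    have hex : ∃ u, u ∈ ball X M S (rk X M S v - 1) ∧ Adj X M u v := ⟨u, hu, huv⟩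
    have hpr : pr X M S v = hex.choose := by
      unfold pr; rw [if_neg hv, dif_pos hex]
    obtain ⟨hc1, hc2⟩ := hex.choose_spec
    rw [hpr]
    refine ⟨hc1, hc2, ?_⟩
    have := rk_le hc1
    omega

/-- A good pair: an explored non-forest edge leaving `S`. -/
def Good (X : EdgeColoring n) (M : Finset (Fin (n - 1))) (S : Finset (Fin n)) (D : ℕ) : Prop :=
  ∃ x z : Fin n, x ∈ ball X M S D ∧ z ∈ ball X M S D ∧ Adj X M x z ∧ x ∉ S ∧
    pr X M S z ≠ x ∧ pr X M S x ≠ z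

lemma doubling (hdeg : ∀ v : Fin n, 3 ≤ (univ.filter (fun u => Adj X M v u)).card)
    {D : ℕ} (hng : ¬ Good X M S D) {r : ℕ} (h1 : 1 ≤ r) (h2 : r + 1 ≤ D) :
    2 * (ball X M S r \ ball X M S (r - 1)).card
      ≤ (ball X M S (r + 1) \ ball X M S r).card := by
  classical
  set Lr := ball X M S r \ ball X M S (r - 1) with hLr
  set Lr1 := ball X M S (r + 1) \ ball X M S r with hLr1
  have key : ∀ x ∈ Lr, 2 ≤ (Lr1.filter (fun z => pr X M S z = x)).card := by
    intro x hx
    rw [hLr, Finset.mem_sdiff] at hx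
    obtain ⟨hxr, hxr1⟩ := hx
    have hrkx : rk X M S x = r := by
      have hle := rk_le hxr
      have : ¬ (rk X M S x ≤ r - 1) := fun hc =>
        hxr1 (ball_mono hc (mem_ball_rk ⟨r, hxr⟩))
      omega
    have hxS : x ∉ S := by
      intro hc
      have : x ∈ ball X M S 0 := by rwa [ball_zero]
      have := rk_le this
      omega
    -- all neighbors of x other than its parent are its children
    have hsub : (univ.filter (fun u => Adj X M x u)).erase (pr X M S x)
        ⊆ Lr1.filter (fun z => pr X M S z = x) := by
      intro z hz
      rw [Finset.mem_erase, Finset.mem_filter] at hz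
      obtain ⟨hzpr, -, hadj⟩ := hz
      have hzball : z ∈ ball X M S (r + 1) := mem_ball_succ_of_adj hxr hadj
      have hzD : z ∈ ball X M S D := ball_mono h2 hzball
      have hxD : x ∈ ball X M S D := ball_mono (by omega : r ≤ D) hxr
      -- from no good pair:
      have hcase : pr X M S z = x ∨ pr X M S x = z := by
        by_contra hc
        push_neg at hc
        exact hng ⟨x, z, hxD, hzD, hadj, hxS, hc.1, hc.2⟩
      have hprz : pr X M S z = x := by
        rcases hcase with hc | hc
        · exact hc
        · exact absurd hc hzpr.symm
      -- z is not in S and has rank r+1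
      have hzS : z ∉ S := by
        intro hzSmem
        rw [pr_mem_self hzSmem] at hprz
        subst hprz
        exact hxS hzSmem
      have hspec := pr_spec ⟨r + 1, hzball⟩ hzS
      rw [hprz] at hspec
      have hrkz_ge : r + 1 ≤ rk X M S z := by
        have := hspec.2.2
        omega
      have hz_not : z ∉ ball X M S r := not_mem_ball_of_lt_rk (by omega)
      rw [Finset.mem_filter, hLr1, Finset.mem_sdiff]
      exact ⟨⟨hzball, hz_not⟩, hprz⟩
    have hcard : 2 ≤ ((univ.filter (fun u => Adj X M x u)).erase (pr X M S x)).card := by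
      have := Finset.pred_card_le_card_erase
        (s := univ.filter (fun u => Adj X M x u)) (a := pr X M S x)
      have h3 := hdeg x
      omega
    exact le_trans hcard (Finset.card_le_card hsub)
  -- sum up over disjoint children sets
  have hdisj : ∀ x ∈ Lr, ∀ y ∈ Lr, x ≠ y →
      Disjoint (Lr1.filter (fun z => pr X M S z = x))
        (Lr1.filter (fun z => pr X M S z = y)) := by
    intro x _ y _ hxy
    rw [Finset.disjoint_left]
    intro z hz hz'
    rw [Finset.mem_filter] at hz hz'
    exact hxy (hz.2.symm.trans hz'.2)
  have hbusub : Lr.biUnion (fun x => Lr1.filter (fun z => pr X M S z = x)) ⊆ Lr1 := by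
    intro z hz
    rcases Finset.mem_biUnion.1 hz with ⟨x, -, hzx⟩
    exact Finset.mem_filter.1 hzx |>.1
  calc 2 * Lr.card = ∑ _x ∈ Lr, 2 := by rw [Finset.sum_const, smul_eq_mul, mul_comm]
  _ ≤ ∑ x ∈ Lr, (Lr1.filter (fun z => pr X M S z = x)).card := Finset.sum_le_sum key
  _ = (Lr.biUnion (fun x => Lr1.filter (fun z => pr X M S z = x))).card :=
      (Finset.card_biUnion hdisj).symm
  _ ≤ Lr1.card := Finset.card_le_card hbusub

/-- There is a good pair within depth `D = log₂ n + 2` provided `S` is not closed. -/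
lemma exists_good (hdeg : ∀ v : Fin n, 3 ≤ (univ.filter (fun u => Adj X M v u)).card)
    (hnc : ∃ a b : Fin n, a ∈ S ∧ Adj X M a b ∧ b ∉ S) :
    Good X M S (Nat.log 2 n + 2) := by
  classical
  by_contra hng
  set D := Nat.log 2 n + 2 with hD
  have hgrow : ∀ r : ℕ, 1 ≤ r → r ≤ D →
      2 ^ (r - 1) ≤ (ball X M S r \ ball X M S (r - 1)).card := by
    intro r
    induction r with
    | zero => intro h _; omega
    | succ m ih =>
      intro _ hmD
      rcases Nat.eq_zero_or_pos m with hm0 | hmpos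
      · subst hm0
        obtain ⟨a, b, haS, hab, hbS⟩ := hnc
        have hb1 : b ∈ ball X M S 1 := mem_ball_succ_of_adj (by rwa [ball_zero]) hab
        have hb0 : b ∉ ball X M S 0 := by rwa [ball_zero]
        have : b ∈ ball X M S 1 \ ball X M S 0 := Finset.mem_sdiff.2 ⟨hb1, hb0⟩
        have := Finset.card_pos.2 ⟨b, this⟩
        simpa using this
      · have hIH := ih hmpos (by omega)
        have hdb := doubling hdeg hng (h1 := hmpos) (h2 := by omega)
        have : m + 1 - 1 = m := by omega
        rw [this]
        have hm1 : m - 1 + 1 = m := by omega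
        calc 2 ^ m = 2 * 2 ^ (m - 1) := by
              rw [← pow_succ']
              congr 1
              omega
        _ ≤ 2 * (ball X M S m \ ball X M S (m - 1)).card := by omega
        _ ≤ _ := hdb
  have hfinal := hgrow D (by omega) (le_refl _)
  have hcardle : (ball X M S D \ ball X M S (D - 1)).card ≤ n := by
    have := Finset.card_le_univ (ball X M S D \ ball X M S (D - 1))
    rwa [Fintype.card_fin] at this
  have hpow : n < 2 ^ (D - 1) := by
    have := Nat.lt_pow_succ_log_self (b := 2) (by omega) n
    have hD1 : D - 1 = Nat.log 2 n + 1 := by omega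
    rwa [hD1]
  omega

/-- Ancestor chain (with fuel). -/
def chF (X : EdgeColoring n) (M : Finset (Fin (n - 1))) (S : Finset (Fin n)) :
    ℕ → Fin n → Finset (Fin n)
  | 0, v => {v}
  | k + 1, v => if v ∈ S then {v} else insert v (chF X M S k (pr X M S v))

variable {X : EdgeColoring n} {M : Finset (Fin (n - 1))} {S : Finset (Fin n)}

lemma chF_pkg : ∀ (k : ℕ) (v : Fin n), (∃ r, v ∈ ball X M S r) → rk X M S v ≤ k →
    v ∈ chF X M S k v ∧
    ((chF X M S k v).filter (fun w => w ∉ S)).card ≤ rk X M S v ∧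
    (∀ w ∈ chF X M S k v, w ∉ S →
      Adj X M w (pr X M S w) ∧ pr X M S w ∈ chF X M S k v ∧
        rk X M S (pr X M S w) < rk X M S w) := by
  intro k
  induction k with
  | zero =>
    intro v hex hrk
    have hvS : v ∈ S := by
      have h0 : rk X M S v = 0 := by omega
      have := mem_ball_rk hex
      rw [h0, ball_zero] at this
      exact this
    refine ⟨Finset.mem_singleton_self v, ?_, ?_⟩
    · have : ({v} : Finset (Fin n)).filter (fun w => w ∉ S) = ∅ := by
        rw [Finset.filter_eq_empty_iff]
        intro w hw
        rw [Finset.mem_singleton] at hw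
        subst hw
        simp [hvS]
      rw [show chF X M S 0 v = {v} from rfl, this]
      simp
    · intro w hw hwS
      rw [show chF X M S 0 v = {v} from rfl, Finset.mem_singleton] at hw
      subst hw
      exact absurd hvS hwS
  | succ k ih =>
    intro v hex hrk
    by_cases hvS : v ∈ S
    · have hch : chF X M S (k + 1) v = {v} := by
        show (if v ∈ S then _ else _) = _
        rw [if_pos hvS]
      refine ⟨by rw [hch]; exact Finset.mem_singleton_self v, ?_, ?_⟩
      · rw [hch]
        have : ({v} : Finset (Fin n)).filter (fun w => w ∉ S) = ∅ := by
          rw [Finset.filter_eq_empty_iff]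
          intro w hw
          rw [Finset.mem_singleton] at hw
          subst hw
          simp [hvS]
        rw [this]
        simp
      · intro w hw hwS
        rw [hch, Finset.mem_singleton] at hw
        subst hw
        exact absurd hvS hwS
    · have hch : chF X M S (k + 1) v = insert v (chF X M S k (pr X M S v)) := by
        show (if v ∈ S then _ else _) = _
        rw [if_neg hvS]
      obtain ⟨hprball, hpradj, hprlt⟩ := pr_spec hex hvS
      have hprex : ∃ r, pr X M S v ∈ ball X M S r := ⟨_, hprball⟩
      have hprk : rk X M S (pr X M S v) ≤ k := by omega
      obtain ⟨ih1, ih2, ih3⟩ := ih (pr X M S v) hprex hprk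
      rw [hch]
      refine ⟨Finset.mem_insert_self _ _, ?_, ?_⟩
      · have hsub : (insert v (chF X M S k (pr X M S v))).filter (fun w => w ∉ S)
            ⊆ insert v ((chF X M S k (pr X M S v)).filter (fun w => w ∉ S)) := by
          intro w hw
          rw [Finset.mem_filter, Finset.mem_insert] at hw
          rcases hw.1 with rfl | hmem
          · exact Finset.mem_insert_self _ _
          · exact Finset.mem_insert_of_mem (Finset.mem_filter.2 ⟨hmem, hw.2⟩)
        calc ((insert v (chF X M S k (pr X M S v))).filter (fun w => w ∉ S)).card
            ≤ (insert v ((chF X M S k (pr X M S v)).filter (fun w => w ∉ S))).card :=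
              Finset.card_le_card hsub
        _ ≤ ((chF X M S k (pr X M S v)).filter (fun w => w ∉ S)).card + 1 :=
              Finset.card_insert_le _ _
        _ ≤ rk X M S v := by
              have h1 := rk_pos hex hvS
              omega
      · intro w hw hwS
        rcases Finset.mem_insert.1 hw with rfl | hmem
        · exact ⟨hpradj.symm, Finset.mem_insert_of_mem ih1, hprlt⟩
        · obtain ⟨ha, hb, hc⟩ := ih3 w hmem hwS
          exact ⟨ha, Finset.mem_insert_of_mem hb, hc⟩

/-- The ear lemma: if `S` is not closed we can grow it gaining one unit of excess. -/
lemma ear (hdeg : ∀ v : Fin n, 3 ≤ (univ.filter (fun u => Adj X M v u)).card)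
    (hnc : ∃ a b : Fin n, a ∈ S ∧ Adj X M a b ∧ b ∉ S) :
    ∃ (S' : Finset (Fin n)) (p : ℕ), S'.card = S.card + p ∧ 1 ≤ p ∧
      p ≤ 2 * (Nat.log 2 n + 2) ∧
      (EG X M S).card + p + 1 ≤ (EG X M S').card := by
  classical
  set D := Nat.log 2 n + 2 with hD
  obtain ⟨x, z, hxD, hzD, hxz, hxS, hgz, hgx⟩ := exists_good hdeg hnc
  obtain ⟨px1, px2, px3⟩ := chF_pkg (X := X) (M := M) (S := S) D x ⟨D, hxD⟩ (rk_le hxD)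
  obtain ⟨pz1, pz2, pz3⟩ := chF_pkg (X := X) (M := M) (S := S) D z ⟨D, hzD⟩ (rk_le hzD)
  set Cx := chF X M S D x with hCx
  set Cz := chF X M S D z with hCz
  set W := (Cx ∪ Cz).filter (fun w => w ∉ S) with hW
  set S' := S ∪ (Cx ∪ Cz) with hS'
  -- basic membership facts
  have hWx : x ∈ W := by
    rw [hW, Finset.mem_filter]
    exact ⟨Finset.mem_union_left _ px1, hxS⟩
  have hparent : ∀ w ∈ W, Adj X M w (pr X M S w) ∧ pr X M S w ∈ Cx ∪ Cz ∧
      rk X M S (pr X M S w) < rk X M S w := by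
    intro w hw
    rw [hW, Finset.mem_filter] at hw
    obtain ⟨hmem, hwS⟩ := hw
    rcases Finset.mem_union.1 hmem with hc | hc
    · obtain ⟨ha, hb, hcc⟩ := px3 w hc hwS
      exact ⟨ha, Finset.mem_union_left _ hb, hcc⟩
    · obtain ⟨ha, hb, hcc⟩ := pz3 w hc hwS
      exact ⟨ha, Finset.mem_union_right _ hb, hcc⟩
  have hCsub : Cx ∪ Cz ⊆ S' := by rw [hS']; exact Finset.subset_union_right
  have hSsub : S ⊆ S' := by rw [hS']; exact Finset.subset_union_left
  -- cardinality of S'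
  have hScard : S'.card = S.card + W.card := by
    rw [hS', hW, ← Finset.sdiff_eq_filter]
    rw [← Finset.union_sdiff_self_eq_union]
    exact Finset.card_union_of_disjoint Finset.disjoint_sdiff
  -- p bound
  have hpbound : W.card ≤ 2 * D := by
    have hsplit : W ⊆ (Cx.filter (fun w => w ∉ S)) ∪ (Cz.filter (fun w => w ∉ S)) := by
      rw [hW, Finset.filter_union]
    calc W.card ≤ ((Cx.filter (fun w => w ∉ S)) ∪ (Cz.filter (fun w => w ∉ S))).card :=
          Finset.card_le_card hsplit
    _ ≤ (Cx.filter (fun w => w ∉ S)).card + (Cz.filter (fun w => w ∉ S)).card :=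
          Finset.card_union_le _ _
    _ ≤ rk X M S x + rk X M S z := by
          have := px2; have := pz2; omega
    _ ≤ 2 * D := by
          have h1 := rk_le hxD
          have h2 := rk_le hzD
          omega
  -- the new edges
  set F : Fin n → Sym2 (Fin n) := fun w => s(w, pr X M S w) with hF
  set newE := insert s(x, z) (W.image F) with hnewE
  have himg_sub : W.image F ⊆ EG X M S' := by
    intro e he
    rcases Finset.mem_image.1 he with ⟨w, hw, rfl⟩
    obtain ⟨hadj, hmem, -⟩ := hparent w hw
    have hwS' : w ∈ S' := by
      apply hCsub
      rw [hW, Finset.mem_filter] at hw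
      exact hw.1
    exact mem_EG hadj hwS' (hCsub hmem)
  have hinj : Set.InjOn F ↑W := by
    intro w1 hw1 w2 hw2 heq
    rw [hF] at heq
    simp only at heq
    rcases Sym2.eq_iff.1 heq with ⟨h1, -⟩ | ⟨h1, h2⟩
    · exact h1
    · exfalso
      have r1 := (hparent w1 (by exact_mod_cast hw1)).2.2
      have r2 := (hparent w2 (by exact_mod_cast hw2)).2.2
      have q1 : rk X M S w1 = rk X M S (pr X M S w2) := by rw [h1]
      have q2 : rk X M S w2 = rk X M S (pr X M S w1) := by rw [h2]
      omega
  have hxz_notin : s(x, z) ∉ W.image F := by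
    intro hcon
    rcases Finset.mem_image.1 hcon with ⟨w, hw, heq⟩
    rw [hF] at heq
    simp only at heq
    rcases Sym2.eq_iff.1 heq with ⟨h1, h2⟩ | ⟨h1, h2⟩
    · subst h1; exact hgx h2
    · subst h1
      exact hgz h2
  have hnewE_card : newE.card = W.card + 1 := by
    rw [hnewE, Finset.card_insert_of_notMem hxz_notin, Finset.card_image_of_injOn hinj]
  have hnewE_sub : newE ⊆ EG X M S' := by
    rw [hnewE]
    intro e he
    rcases Finset.mem_insert.1 he with rfl | he'
    · have hzS' : z ∈ S' := hCsub (Finset.mem_union_right _ pz1)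
      have hxS' : x ∈ S' := hCsub (Finset.mem_union_left _ px1)
      exact mem_EG hxz hxS' hzS'
    · exact himg_sub he'
  have hnewE_disj : Disjoint newE (EG X M S) := by
    rw [Finset.disjoint_left]
    intro e he heS
    rw [hnewE] at he
    rcases Finset.mem_insert.1 he with rfl | he'
    · exact not_mem_EG (Sym2.mem_mk_left _ _) hxS heS
    · rcases Finset.mem_image.1 he' with ⟨w, hw, rfl⟩
      rw [hW, Finset.mem_filter] at hw
      exact not_mem_EG (by rw [hF]; exact Sym2.mem_mk_left _ _) hw.2 heS
  -- putting it together
  refine ⟨S', W.card, hScard, Finset.card_pos.2 ⟨x, hWx⟩, hpbound, ?_⟩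
  have hunion_sub : (EG X M S) ∪ newE ⊆ EG X M S' := by
    apply Finset.union_subset (EG_mono hSsub) hnewE_sub
  have := Finset.card_le_card hunion_sub
  rw [Finset.card_union_of_disjoint hnewE_disj.symm] at this
  omega

/-- Main iteration: build a set with excess `t` in the `M`-union graph. -/
lemma iter (X : EdgeColoring n) (M : Finset (Fin (n - 1)))
    (hdeg : ∀ v : Fin n, 3 ≤ (univ.filter (fun u => Adj X M v u)).card)
    (t : ℕ) (ht : 1 ≤ t) (hnt : 2 * t < n) :
    ∀ fuel j s : ℕ, ∀ S : Finset (Fin n),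
      S.card + j ≤ (EG X M S).card + s →
      S.card ≤ s + 2 * (Nat.log 2 n + 2) * j →
      s ≤ S.card + 1 →
      s ≤ 2 * t + 1 →
      j ≤ t + s →
      2 * (2 * t + 2 - s) + (t + s - j) ≤ fuel →
      ∃ T : Finset (Fin n),
        T.card ≤ (2 * t + 1) + 2 * (Nat.log 2 n + 2) * (3 * t + 1) ∧
        T.card + t ≤ (EG X M T).card := by
  intro fuel
  induction fuel with
  | zero =>
    intro j s S _ _ _ hC' _ hfuel
    omega
  | succ m IH =>
    intro j s S hA hB hC hC' hJ hfuel
    set D := Nat.log 2 n + 2 with hD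
    have hsize : S.card ≤ (2 * t + 1) + 2 * D * (3 * t + 1) := by
      have hj : j ≤ 3 * t + 1 := by omega
      have : 2 * D * j ≤ 2 * D * (3 * t + 1) := Nat.mul_le_mul_left _ hj
      omega
    by_cases hdone : S.card + t ≤ (EG X M S).card
    · exact ⟨S, hsize, hdone⟩
    · by_cases hopen : ∃ a b : Fin n, a ∈ S ∧ Adj X M a b ∧ b ∉ S
      · -- ear step
        obtain ⟨S', p, hcard, hp1, hpD, hE⟩ := ear hdeg hopen
        have hJ' : j + 1 ≤ t + s := by omega
        apply IH (j + 1) s S'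
        · omega
        · have : 2 * D * (j + 1) = 2 * D * j + 2 * D := by ring
          omega
        · omega
        · exact hC'
        · omega
        · omega
      · -- closed
        push_neg at hopen
        by_cases hbig : 2 * t ≤ S.card
        · have hh : 3 * S.card ≤ 2 * (EG X M S).card :=
            closed_handshake X M S hdeg (fun a b ha hab => hopen a b ha hab)
          exact ⟨S, hsize, by omega⟩
        · -- seed
          have hex : ∃ v : Fin n, v ∉ S := by
            by_contra hcon
            push_neg at hcon
            have : (univ : Finset (Fin n)) ⊆ S := fun v _ => hcon v
            have := Finset.card_le_card this
            rw [Finset.card_univ, Fintype.card_fin] at this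
            omega
          obtain ⟨v, hv⟩ := hex
          have hcardins : (insert v S).card = S.card + 1 := Finset.card_insert_of_notMem hv
          apply IH j (s + 1) (insert v S)
          · have := Finset.card_le_card (EG_mono (Finset.subset_insert v S)
              (X := X) (M := M))
            omega
          · omega
          · omega
          · omega
          · omega
          · omega

lemma natlog_le_real {m : ℕ} (hm : 1 ≤ m) : (Nat.log 2 m : ℝ) ≤ 2 * Real.log m := by
  have h1 : (2 : ℝ) ^ (Nat.log 2 m) ≤ (m : ℝ) := by
    exact_mod_cast Nat.pow_log_le_self 2 (by omega)
  have h2 : Real.log ((2 : ℝ) ^ (Nat.log 2 m)) ≤ Real.log m :=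
    Real.log_le_log (by positivity) h1
  rw [Real.log_pow] at h2
  have h3 : (0.6931471803 : ℝ) < Real.log 2 := Real.log_two_gt_d9
  have h4 : (0 : ℝ) ≤ (Nat.log 2 m : ℝ) := Nat.cast_nonneg _
  nlinarith

/-- Main structural lemma, packaged. -/
lemma main_lemma {n : ℕ} (X : EdgeColoring n) (h1f : IsOneFactorization X)
    (t : ℕ) (ht : 1 ≤ t) (hn : 2 * t + 16 ≤ n) :
    ∃ T : Finset (Fin n),
      T.card ≤ (2 * t + 1) + 2 * (Nat.log 2 n + 2) * (3 * t + 1) ∧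
      (T.card : ℤ) + t - 3 ≤ deficit X T := by
  classical
  have hn1 : 16 ≤ n := by omega
  have h3n : 3 ≤ n - 1 := by omega
  set c0 : Fin (n - 1) := ⟨0, by omega⟩ with hc0
  set c1 : Fin (n - 1) := ⟨1, by omega⟩ with hc1
  set c2 : Fin (n - 1) := ⟨2, by omega⟩ with hc2
  set M : Finset (Fin (n - 1)) := {c0, c1, c2} with hM
  have hMcard : M.card = 3 := by
    rw [hM]
    rw [Finset.card_insert_of_notMem, Finset.card_insert_of_notMem, Finset.card_singleton]
    · simp [hc1, hc2, Fin.ext_iff]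
    · simp [hc0, hc1, hc2, Fin.ext_iff]
  have hdeg : ∀ v : Fin n, 3 ≤ (univ.filter (fun u => Adj X M v u)).card := by
    intro v
    have := deg_ge h1f M v
    rwa [hMcard] at this
  have hnt : 2 * t < n := by omega
  set v0 : Fin n := ⟨0, by omega⟩ with hv0
  obtain ⟨T, hT1, hT2⟩ := iter X M hdeg t ht hnt (5 * t + 3) 0 1 ({v0} : Finset (Fin n))
    (by rw [Finset.card_singleton]; omega)
    (by rw [Finset.card_singleton]; omega)
    (by rw [Finset.card_singleton]; omega)
    (by omega)
    (by omega)
    (by omega)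
  exact ⟨T, hT1, deficit_from_EG hMcard hT2⟩

end DefPf
/-- For every integer `d ≥ −2` there are a constant `C > 0` and `n₀` such that
for every even `n ≥ n₀`, every one-factorization of `K_n` has a set `S` of `k ≤ C·log n` vertices
with deficit at least `k + d`. -/
theorem exists_log_size_set_large_deficit (d : ℤ) (hd : -2 ≤ d) :
    ∃ (Cc : ℝ) (n₀ : ℕ), 0 < Cc ∧
      ∀ n : ℕ, n₀ ≤ n → Even n →
        ∀ X : EdgeColoring n, IsOneFactorization X →
          ∃ S : Finset (Fin n), (S.card : ℝ) ≤ Cc * Real.log n ∧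
            (S.card : ℤ) + d ≤ deficit X S := by
  set t : ℕ := (d + 3).toNat with htdef
  have htZ : (t : ℤ) = d + 3 := Int.toNat_of_nonneg (by omega)
  have ht1 : 1 ≤ t := by omega
  refine ⟨(26 * (t : ℝ) + 11), 2 * t + 16, by positivity, ?_⟩
  intro n hn _hev X h1f
  obtain ⟨T, hT1, hT2⟩ := DefPf.main_lemma X h1f t ht1 hn
  refine ⟨T, ?_, ?_⟩
  · set L := Nat.log 2 n with hL
    have hL4 : 4 ≤ L := by
      rw [hL]
      have hpow : (2 : ℕ) ^ 4 ≤ n := by norm_num; omega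
      exact Nat.le_log_of_pow_le (by norm_num) hpow
    have hnatbound : T.card ≤ (10 * t + 4) * L := by
      have e1 : (2 * t + 1) + 2 * (L + 2) * (3 * t + 1) = (6 * t + 2) * L + (14 * t + 5) := by
        ring
      have e2 : (10 * t + 4) * L = (6 * t + 2) * L + (4 * t + 2) * L := by ring
      have e3 : (4 * t + 2) * 4 ≤ (4 * t + 2) * L := Nat.mul_le_mul_left _ hL4
      omega
    have hlog : (L : ℝ) ≤ 2 * Real.log n := DefPf.natlog_le_real (by omega)
    have hlogpos : (0 : ℝ) ≤ Real.log n := by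
      apply Real.log_nonneg
      have : (1 : ℕ) ≤ n := by omega
      exact_mod_cast this
    have hcast : (T.card : ℝ) ≤ ((10 * t + 4 : ℕ) : ℝ) * (L : ℝ) := by
      exact_mod_cast hnatbound
    have htR : (0 : ℝ) ≤ (t : ℝ) := Nat.cast_nonneg t
    calc (T.card : ℝ) ≤ ((10 * t + 4 : ℕ) : ℝ) * (L : ℝ) := hcast
    _ ≤ ((10 * t + 4 : ℕ) : ℝ) * (2 * Real.log n) := by
        apply mul_le_mul_of_nonneg_left hlog (by positivity)
    _ ≤ (26 * (t : ℝ) + 11) * Real.log n := by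
        push_cast
        nlinarith
  · omega
end
end

section
/- For every positive integer a there exist a constant b > 0 and an integer n₀ such that every cubic (3-regular) simple graph on n ≥ n₀ vertices has a set W of at most b·log n vertices that spans at least |W| + a edges. -/
set_option linter.unusedSectionVars false
set_option maxHeartbeats 1600000
set_option linter.unusedVariables false
open Finset

namespace CubicAux

variable {V : Type} [Fintype V] [DecidableEq V] (G : SimpleGraph V) [DecidableRel G.Adj]

/-- edges of `G` spanned by `W` -/
def spanned (W : Finset V) : Finset (Sym2 V) :=
  G.edgeFinset.filter (fun e => ∀ x ∈ e, x ∈ W)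

/-- the induced subgraph on `S`, as a graph on `V` -/
def ind (S : Finset V) : SimpleGraph V where
  Adj x y := G.Adj x y ∧ x ∈ S ∧ y ∈ S
  symm := ⟨by rintro x y ⟨h, hx, hy⟩; exact ⟨h.symm, hy, hx⟩⟩
  loopless := ⟨by rintro x ⟨h, _⟩; exact G.irrefl h⟩

instance (S : Finset V) : DecidableRel (ind G S).Adj := fun x y =>
  inferInstanceAs (Decidable (G.Adj x y ∧ x ∈ S ∧ y ∈ S))

lemma edgeFinset_ind (S : Finset V) : (ind G S).edgeFinset = spanned G S := by
  ext e
  induction e with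
  | _ x y =>
    simp only [SimpleGraph.mem_edgeFinset, SimpleGraph.mem_edgeSet, spanned, mem_filter,
      Sym2.mem_iff]
    constructor
    · rintro ⟨h, hx, hy⟩
      exact ⟨h, by rintro z (rfl | rfl) <;> assumption⟩
    · rintro ⟨h, hz⟩
      exact ⟨h, hz x (Or.inl rfl), hz y (Or.inr rfl)⟩

/-- a set closed under adjacency -/
def Closed (S : Finset V) : Prop := ∀ x ∈ S, ∀ y : V, G.Adj x y → y ∈ S

lemma degree_ind_of_closed {S : Finset V} {u : V} (hu : u ∈ S)
    (hcl : ∀ y : V, G.Adj u y → y ∈ S) : (ind G S).degree u = G.degree u := by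
  unfold SimpleGraph.degree
  congr 1
  ext y
  simp only [SimpleGraph.mem_neighborFinset]
  exact ⟨fun h => h.1, fun h => ⟨h, hu, hcl y h⟩⟩

lemma degree_ind_of_not_mem {S : Finset V} {u : V} (hu : u ∉ S) :
    (ind G S).degree u = 0 := by
  unfold SimpleGraph.degree
  rw [Finset.card_eq_zero]
  ext y
  simp only [SimpleGraph.mem_neighborFinset, Finset.notMem_empty, iff_false]
  rintro ⟨_, hx, _⟩; exact hu hx

lemma handshake_lower (hdeg : ∀ v : V, G.degree v = 3) {S' S : Finset V} (h1 : S' ⊆ S)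
    (h2 : ∀ x ∈ S', ∀ y : V, G.Adj x y → y ∈ S) :
    3 * S'.card ≤ 2 * (spanned G S).card := by
  have hh := (ind G S).sum_degrees_eq_twice_card_edges
  rw [edgeFinset_ind] at hh
  calc 3 * S'.card = ∑ u ∈ S', (ind G S).degree u := by
        rw [Finset.sum_congr rfl (fun u hu =>
          (degree_ind_of_closed G (h1 hu) (h2 u hu)).trans (hdeg u))]
        simp [mul_comm]
      _ ≤ ∑ u : V, (ind G S).degree u := Finset.sum_le_sum_of_subset (Finset.subset_univ _)
      _ = 2 * (spanned G S).card := hh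

lemma handshake_closed (hdeg : ∀ v : V, G.degree v = 3) {S : Finset V} (hcl : Closed G S) :
    2 * (spanned G S).card = 3 * S.card := by
  have hh := (ind G S).sum_degrees_eq_twice_card_edges
  rw [edgeFinset_ind] at hh
  rw [← hh, ← Finset.sum_subset (Finset.subset_univ S)
    (fun u _ hu => degree_ind_of_not_mem G hu)]
  rw [Finset.sum_congr rfl (fun u hu =>
    (degree_ind_of_closed G hu (hcl u hu)).trans (hdeg u))]
  simp [mul_comm]

open Classical in
noncomputable def ball (v : V) (r : ℕ) : Finset V :=
  Finset.univ.filter (fun u => G.Reachable v u ∧ G.dist v u ≤ r)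

lemma mem_ball {v u : V} {r : ℕ} :
    u ∈ ball G v r ↔ G.Reachable v u ∧ G.dist v u ≤ r := by
  classical simp [ball]

lemma ball_mono {v : V} {r s : ℕ} (h : r ≤ s) : ball G v r ⊆ ball G v s := by
  intro u hu
  rw [mem_ball] at *
  exact ⟨hu.1, hu.2.trans h⟩

lemma ball_zero (v : V) : ball G v 0 = {v} := by
  ext u
  rw [mem_ball, Finset.mem_singleton]
  constructor
  · rintro ⟨hr, hd⟩
    have := (hr.dist_eq_zero_iff).mp (Nat.le_zero.mp hd)
    exact this.symm
  · rintro rfl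
    exact ⟨SimpleGraph.Reachable.refl u, by simp [SimpleGraph.dist_self]⟩

lemma adj_dist_le {v u w : V} (hr : G.Reachable v u) (h : G.Adj u w) :
    G.dist v w ≤ G.dist v u + 1 := by
  obtain ⟨p, hp⟩ := hr.exists_walk_length_eq_dist
  have := SimpleGraph.dist_le (p.concat h)
  rwa [SimpleGraph.Walk.length_concat, hp] at this

lemma exists_parent {v u : V} (hr : G.Reachable v u) (hne : u ≠ v) :
    ∃ w, G.Adj w u ∧ G.Reachable v w ∧ G.dist v w + 1 = G.dist v u := by
  obtain ⟨p, hp⟩ := hr.exists_walk_length_eq_dist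
  obtain ⟨w, hadj, q, hq⟩ := SimpleGraph.Walk.exists_eq_cons_of_ne hne p.reverse
  -- hadj : G.Adj u w, q : G.Walk w v
  have hlen : q.length + 1 = G.dist v u := by
    have := congrArg SimpleGraph.Walk.length hq
    rw [SimpleGraph.Walk.length_reverse, SimpleGraph.Walk.length_cons] at this
    omega
  have hrw : G.Reachable v w := ⟨q.reverse⟩
  have h1 : G.dist v w ≤ q.length := by
    have := SimpleGraph.dist_le q.reverse
    rwa [SimpleGraph.Walk.length_reverse] at this
  have h2 : G.dist v u ≤ G.dist v w + 1 := adj_dist_le G hrw hadj.symm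
  exact ⟨w, hadj.symm, hrw, by omega⟩

open Classical in
noncomputable def par (v : V) : V → V := fun u =>
  if h : G.Reachable v u ∧ u ≠ v then Classical.choose (exists_parent G h.1 h.2) else u

lemma par_spec {v u : V} (hr : G.Reachable v u) (hne : u ≠ v) :
    G.Adj (par G v u) u ∧ G.Reachable v (par G v u) ∧
      G.dist v (par G v u) + 1 = G.dist v u := by
  classical
  rw [par, dif_pos ⟨hr, hne⟩]
  exact Classical.choose_spec (exists_parent G hr hne)

/-- iterating the parent map: reachability and distance bookkeeping -/
lemma iter_par {v x : V} (hx : G.Reachable v x) :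
    ∀ i, i ≤ G.dist v x →
      G.Reachable v ((par G v)^[i] x) ∧ G.dist v ((par G v)^[i] x) + i = G.dist v x := by
  intro i
  induction i with
  | zero => intro _; simpa using hx
  | succ i ih =>
    intro hi
    obtain ⟨hr, hd⟩ := ih (by omega)
    have hune : (par G v)^[i] x ≠ v := by
      intro h
      rw [h, SimpleGraph.dist_self] at hd
      omega
    obtain ⟨_, hr', hd'⟩ := par_spec G hr hune
    rw [Function.iterate_succ_apply']
    exact ⟨hr', by omega⟩

noncomputable def chain (v x : V) : Finset V :=
  (Finset.range (G.dist v x + 1)).image (fun i => (par G v)^[i] x)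

lemma card_chain_le (v x : V) : (chain G v x).card ≤ G.dist v x + 1 := by
  exact le_trans (Finset.card_image_le) (by simp)

lemma mem_chain {v x u : V} :
    u ∈ chain G v x ↔ ∃ i, i ≤ G.dist v x ∧ (par G v)^[i] x = u := by
  simp only [chain, Finset.mem_image, Finset.mem_range]
  constructor
  · rintro ⟨i, hi, h⟩; exact ⟨i, by omega, h⟩
  · rintro ⟨i, hi, h⟩; exact ⟨i, by omega, h⟩

lemma self_mem_chain (v x : V) : x ∈ chain G v x := by
  rw [mem_chain]
  exact ⟨0, Nat.zero_le _, rfl⟩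

noncomputable def parEdges (v : V) (S : Finset V) : Finset (Sym2 V) :=
  (S.erase v).image (fun u => s(u, par G v u))

lemma parEdges_card {v : V} {S : Finset V} (hS : ∀ u ∈ S, G.Reachable v u) :
    (parEdges G v S).card = (S.erase v).card := by
  apply Finset.card_image_of_injOn
  intro u hu u' hu' heq
  have hu1 := Finset.mem_of_mem_erase hu
  have hu'1 := Finset.mem_of_mem_erase hu'
  have hne := Finset.ne_of_mem_erase hu
  have hne' := Finset.ne_of_mem_erase hu'
  obtain ⟨_, _, hd⟩ := par_spec G (hS u hu1) hne
  obtain ⟨_, _, hd'⟩ := par_spec G (hS u' hu'1) hne'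
  rw [Sym2.eq_iff] at heq
  rcases heq with ⟨h1, _⟩ | ⟨h1, h2⟩
  · exact h1
  · rw [← h1] at hd'
    rw [h2] at hd
    exfalso
    omega

lemma parEdges_subset_spanned {v : V} {S : Finset V} (hS : ∀ u ∈ S, G.Reachable v u)
    (hpar : ∀ u ∈ S, u ≠ v → par G v u ∈ S) :
    parEdges G v S ⊆ spanned G S := by
  intro e he
  obtain ⟨u, hu, rfl⟩ := Finset.mem_image.mp he
  have hu1 := Finset.mem_of_mem_erase hu
  have hne := Finset.ne_of_mem_erase hu
  obtain ⟨hadj, _, _⟩ := par_spec G (hS u hu1) hne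
  rw [spanned, Finset.mem_filter]
  constructor
  · rw [SimpleGraph.mem_edgeFinset, SimpleGraph.mem_edgeSet]
    exact hadj.symm
  · intro x hx
    rw [Sym2.mem_iff] at hx
    rcases hx with rfl | rfl
    · exact hu1
    · exact hpar u hu1 hne

lemma parEdges_mono (v : V) {S T : Finset V} (h : S ⊆ T) :
    parEdges G v S ⊆ parEdges G v T :=
  Finset.image_subset_image (Finset.erase_subset_erase v h)

lemma card_supp_le (e : Sym2 V) : (Finset.univ.filter (· ∈ e)).card ≤ 2 := by
  induction e with
  | _ x y =>
    refine le_trans (Finset.card_le_card (fun z hz => ?_))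
      ((Finset.card_insert_le x {y}).trans (by simp))
    rw [Finset.mem_filter, Sym2.mem_iff] at hz
    rcases hz.2 with rfl | rfl
    · exact Finset.mem_insert_self _ _
    · exact Finset.mem_insert_of_mem (Finset.mem_singleton_self _)

lemma caseA (a : ℕ) (v : V) (r : ℕ)
    (hsucc : (ball G v r).card + a ≤ (spanned G (ball G v r)).card) :
    ∃ W : Finset V, W.card ≤ (a + 1) * (2 * (r + 1)) ∧
      W.card + a ≤ (spanned G W).card := by
  set B := ball G v r with hB
  have hreach : ∀ u ∈ B, G.Reachable v u := fun u hu => ((mem_ball G).mp hu).1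
  have hdist : ∀ u ∈ B, G.dist v u ≤ r := fun u hu => ((mem_ball G).mp hu).2
  have hPEcard : (parEdges G v B).card = (B.erase v).card := parEdges_card G hreach
  have hPEle : (parEdges G v B).card ≤ B.card := by
    rw [hPEcard]; exact Finset.card_le_card (Finset.erase_subset v B)
  have hBle : B.card - 1 ≤ (parEdges G v B).card + 0 := by
    rw [hPEcard]
    have := Finset.pred_card_le_card_erase (s := B) (a := v)
    omega
  have hdiff : a + 1 ≤ ((spanned G B) \ (parEdges G v B)).card := by
    have h2 := Finset.le_card_sdiff (parEdges G v B) (spanned G B)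
    have h3 : v ∈ B := by
      rw [mem_ball]
      exact ⟨SimpleGraph.Reachable.refl v, by simp [SimpleGraph.dist_self]⟩
    have h4 : (B.erase v).card + 1 = B.card := Finset.card_erase_add_one h3
    omega
  obtain ⟨F, hFsub, hFcard⟩ := Finset.exists_subset_card_eq hdiff
  set W : Finset V :=
    F.biUnion (fun e => (Finset.univ.filter (· ∈ e)).biUnion (fun x => chain G v x)) with hW
  have hmemW : ∀ u, u ∈ W ↔ ∃ e ∈ F, ∃ x, x ∈ e ∧ u ∈ chain G v x := by
    intro u
    simp only [hW, Finset.mem_biUnion, Finset.mem_filter, Finset.mem_univ, true_and]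
  have hFend : ∀ e ∈ F, ∀ x ∈ e, x ∈ B := by
    intro e he x hx
    have := hFsub he
    rw [Finset.mem_sdiff, spanned, Finset.mem_filter] at this
    exact this.1.2 x hx
  have hWB : W ⊆ B := by
    intro u hu
    obtain ⟨e, he, x, hx, hc⟩ := (hmemW u).mp hu
    have hxB := hFend e he x hx
    rw [mem_chain] at hc
    obtain ⟨i, hi, rfl⟩ := hc
    obtain ⟨hr, hd⟩ := iter_par G (hreach x hxB) i hi
    rw [mem_ball]
    exact ⟨hr, by have := hdist x hxB; omega⟩
  have hWcard : W.card ≤ (a + 1) * (2 * (r + 1)) := by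
    rw [hW]
    refine le_trans (Finset.card_biUnion_le_card_mul _ _ (2 * (r + 1)) (fun e he => ?_))
      (by rw [hFcard])
    refine le_trans (Finset.card_biUnion_le_card_mul _ _ (r + 1) (fun x hx => ?_)) ?_
    · rw [Finset.mem_filter] at hx
      have hxB := hFend e he x hx.2
      exact (card_chain_le G v x).trans (by have := hdist x hxB; omega)
    · exact Nat.mul_le_mul_right _ (card_supp_le e)
  have hWpar : ∀ u ∈ W, u ≠ v → par G v u ∈ W := by
    intro u hu hne
    obtain ⟨e, he, x, hx, hc⟩ := (hmemW u).mp hu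
    rw [mem_chain] at hc
    obtain ⟨i, hi, hieq⟩ := hc
    have hxB := hFend e he x hx
    obtain ⟨hr, hd⟩ := iter_par G (hreach x hxB) i hi
    rw [hieq] at hr hd
    have hpos : 0 < G.dist v u := hr.pos_dist_of_ne (fun h => hne h.symm)
    refine (hmemW _).mpr ⟨e, he, x, hx, ?_⟩
    rw [mem_chain]
    exact ⟨i + 1, by omega, by rw [Function.iterate_succ_apply', hieq]⟩
  have hWreach : ∀ u ∈ W, G.Reachable v u := fun u hu => hreach u (hWB hu)
  have hPEW : (parEdges G v W).card = (W.erase v).card := parEdges_card G hWreach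
  have hPEWspan : parEdges G v W ⊆ spanned G W := parEdges_subset_spanned G hWreach hWpar
  have hFspan : F ⊆ spanned G W := by
    intro e he
    have h1 := hFsub he
    rw [Finset.mem_sdiff, spanned, Finset.mem_filter] at h1
    rw [spanned, Finset.mem_filter]
    refine ⟨h1.1.1, fun x hx => ?_⟩
    exact (hmemW x).mpr ⟨e, he, x, hx, self_mem_chain G v x⟩
  have hdisj : Disjoint (parEdges G v W) F := by
    rw [Finset.disjoint_left]
    intro e he heF
    have h1 := hFsub heF
    rw [Finset.mem_sdiff] at h1
    exact h1.2 (parEdges_mono G v hWB he)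
  refine ⟨W, hWcard, ?_⟩
  have hsub : parEdges G v W ∪ F ⊆ spanned G W := Finset.union_subset hPEWspan hFspan
  have hcard := Finset.card_le_card hsub
  rw [Finset.card_union_of_disjoint hdisj, hPEW, hFcard] at hcard
  have := Finset.pred_card_le_card_erase (s := W) (a := v)
  omega

lemma v_mem_ball (v : V) (r : ℕ) : v ∈ ball G v r := by
  rw [mem_ball]
  exact ⟨SimpleGraph.Reachable.refl v, by simp [SimpleGraph.dist_self]⟩

lemma adj_mem_ball_succ {v x y : V} {r : ℕ} (hx : x ∈ ball G v r) (h : G.Adj x y) :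
    y ∈ ball G v (r + 1) := by
  rw [mem_ball] at hx ⊢
  exact ⟨hx.1.trans h.reachable, le_trans (adj_dist_le G hx.1 h) (by omega)⟩

lemma expand (hdeg : ∀ v : V, G.degree v = 3) (v : V) (r : ℕ) :
    3 * (ball G v r).card ≤ 2 * (spanned G (ball G v (r + 1))).card :=
  handshake_lower G hdeg (ball_mono G (by omega))
    (fun x hx y hy => adj_mem_ball_succ G hx hy)

lemma closed_of_stable {v : V} {r : ℕ} (h : ball G v (r + 1) = ball G v r) :
    Closed G (ball G v r) := by
  intro x hx y hxy
  rw [← h]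
  exact adj_mem_ball_succ G hx hxy

lemma closed_reach {S : Finset V} (hS : Closed G S) {x y : V} (hx : x ∈ S)
    (h : G.Reachable x y) : y ∈ S := by
  obtain ⟨p⟩ := h
  induction p with
  | nil => exact hx
  | cons hadj _ ih => exact ih (hS _ hx _ hadj)

lemma four_le_card_closed (hdeg : ∀ v : V, G.degree v = 3) {S : Finset V} {v : V}
    (hv : v ∈ S) (hS : Closed G S) : 4 ≤ S.card := by
  have hsub : insert v (G.neighborFinset v) ⊆ S := by
    intro x hx
    rcases Finset.mem_insert.mp hx with rfl | hx
    · exact hv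
    · exact hS v hv x (by rwa [SimpleGraph.mem_neighborFinset] at hx)
  have hns : v ∉ G.neighborFinset v := by
    rw [SimpleGraph.mem_neighborFinset]
    exact G.irrefl
  have := Finset.card_le_card hsub
  rwa [Finset.card_insert_of_notMem hns, SimpleGraph.card_neighborFinset_eq_degree,
    hdeg v] at this

lemma stabilize (hdeg : ∀ v : V, G.degree v = 3) (a : ℕ) (ha : 0 < a) (v : V)
    (hfail : ∀ r, r ≤ 4 * a + 4 * (Nat.log 2 (Fintype.card V) + 1) →
      (spanned G (ball G v r)).card < (ball G v r).card + a) :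
    ∃ r, r < 4 * a + 4 * (Nat.log 2 (Fintype.card V) + 1) ∧
      ball G v (r + 1) = ball G v r := by
  set n := Fintype.card V with hn
  set s := Nat.log 2 n + 1 with hs
  set R := 4 * a + 4 * s with hR
  by_contra hcon
  push_neg at hcon
  -- strict growth
  have hstep : ∀ r, r < R → (ball G v r).card + 1 ≤ (ball G v (r + 1)).card := by
    intro r hr
    have hss : ball G v r ⊂ ball G v (r + 1) :=
      Finset.ssubset_iff_subset_ne.mpr ⟨ball_mono G (by omega), (hcon r hr).symm⟩
    exact Finset.card_lt_card hss
  -- recursion from failure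
  have hrec : ∀ r, r < R →
      3 * (ball G v r).card + 2 ≤ 2 * (ball G v (r + 1)).card + 2 * a := by
    intro r hr
    have h1 := expand G hdeg v r
    have h2 := hfail (r + 1) (by omega)
    omega
  have hmono : ∀ r t : ℕ, r ≤ t → (ball G v r).card ≤ (ball G v t).card :=
    fun r t h => Finset.card_le_card (ball_mono G h)
  -- linear growth
  have hlin : ∀ t, t ≤ R → t + 1 ≤ (ball G v t).card := by
    intro t
    induction t with
    | zero =>
      intro _
      rw [ball_zero]
      simp
    | succ t ih =>
      intro ht
      have := hstep t (by omega)
      have := ih (by omega)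
      omega
  -- exponential growth
  have hexp : ∀ t, 4 * a + t ≤ R →
      4 * a * 5 ^ t ≤ (ball G v (4 * a + t)).card * 4 ^ t := by
    intro t
    induction t with
    | zero =>
      intro h
      have := hlin (4 * a) (by omega)
      simpa using by omega
    | succ t ih =>
      intro ht
      have ih' := ih (by omega)
      have hm4a : 4 * a ≤ (ball G v (4 * a + t)).card := by
        have := hlin (4 * a + t) (by omega)
        omega
      have hkey : 5 * (ball G v (4 * a + t)).card ≤ 4 * (ball G v (4 * a + t + 1)).card := by
        have := hrec (4 * a + t) (by omega)
        omega
      have : 4 * a * 5 ^ (t + 1) = 5 * (4 * a * 5 ^ t) := by ring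
      rw [this]
      have h2 : 5 * (4 * a * 5 ^ t) ≤ 5 * ((ball G v (4 * a + t)).card * 4 ^ t) :=
        Nat.mul_le_mul_left 5 ih'
      have h3 : 5 * ((ball G v (4 * a + t)).card * 4 ^ t)
          = (5 * (ball G v (4 * a + t)).card) * 4 ^ t := by ring
      have h4 : (5 * (ball G v (4 * a + t)).card) * 4 ^ t
          ≤ (4 * (ball G v (4 * a + t + 1)).card) * 4 ^ t :=
        Nat.mul_le_mul_right _ hkey
      have h5 : (4 * (ball G v (4 * a + t + 1)).card) * 4 ^ t
          = (ball G v (4 * a + t + 1)).card * 4 ^ (t + 1) := by ring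
      calc 5 * (4 * a * 5 ^ t) ≤ 5 * ((ball G v (4 * a + t)).card * 4 ^ t) := h2
        _ = (5 * (ball G v (4 * a + t)).card) * 4 ^ t := h3
        _ ≤ (4 * (ball G v (4 * a + t + 1)).card) * 4 ^ t := h4
        _ = (ball G v (4 * a + t + 1)).card * 4 ^ (t + 1) := h5
        _ = (ball G v (4 * a + (t + 1))).card * 4 ^ (t + 1) := by
              rw [Nat.add_assoc]
  -- contradiction
  have hfin := hexp (4 * s) (by omega)
  have hle_n : (ball G v (4 * a + 4 * s)).card ≤ n := by
    rw [hn]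
    exact Finset.card_le_univ _
  have h1 : 4 * a * 5 ^ (4 * s) ≤ n * 4 ^ (4 * s) :=
    le_trans hfin (Nat.mul_le_mul_right _ hle_n)
  have h625 : (5 : ℕ) ^ (4 * s) = 625 ^ s := by
    rw [Nat.pow_mul]
  have h256 : (4 : ℕ) ^ (4 * s) = 256 ^ s := by
    rw [Nat.pow_mul]
  have h512 : (512 : ℕ) ^ s = 256 ^ s * 2 ^ s := by
    rw [← Nat.mul_pow]
  have h2 : 4 * a * (256 ^ s * 2 ^ s) ≤ n * 256 ^ s := by
    calc 4 * a * (256 ^ s * 2 ^ s) = 4 * a * 512 ^ s := by rw [h512]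
      _ ≤ 4 * a * 625 ^ s := Nat.mul_le_mul_left _ (Nat.pow_le_pow_left (by norm_num) s)
      _ = 4 * a * 5 ^ (4 * s) := by rw [h625]
      _ ≤ n * 4 ^ (4 * s) := h1
      _ = n * 256 ^ s := by rw [h256]
  have h3 : 4 * a * 2 ^ s ≤ n := by
    have hpos : 0 < (256 : ℕ) ^ s := Nat.pow_pos (by norm_num)
    have : (4 * a * 2 ^ s) * 256 ^ s ≤ n * 256 ^ s := by
      calc (4 * a * 2 ^ s) * 256 ^ s = 4 * a * (256 ^ s * 2 ^ s) := by ring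
        _ ≤ n * 256 ^ s := h2
    exact Nat.le_of_mul_le_mul_right this hpos
  have hnlt : n < 2 ^ s := by
    rw [hs]
    exact Nat.lt_pow_succ_log_self (by norm_num) n
  have : 2 ^ s ≤ 4 * a * 2 ^ s := by
    have : 1 ≤ 4 * a := by omega
    calc 2 ^ s = 1 * 2 ^ s := by ring
      _ ≤ 4 * a * 2 ^ s := Nat.mul_le_mul_right _ this
  omega

lemma greedy (a : ℕ) (ha : 0 < a)
    (h : ∀ v : V, ∃ C : Finset V, v ∈ C ∧ Closed G C ∧ (∀ u ∈ C, G.Reachable v u) ∧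
      4 ≤ C.card ∧ C.card ≤ 2 * a)
    (hbig : 2 * a * a < Fintype.card V) :
    ∃ W : Finset V, Closed G W ∧ 4 * a ≤ W.card ∧ W.card ≤ 2 * a * a := by
  have key : ∀ k : ℕ, k ≤ a →
      ∃ W : Finset V, Closed G W ∧ 4 * k ≤ W.card ∧ W.card ≤ 2 * a * k := by
    intro k
    induction k with
    | zero =>
      intro _
      exact ⟨∅, fun x hx => absurd hx (Finset.notMem_empty x), by simp, by simp⟩
    | succ k ih =>
      intro hk
      obtain ⟨W, hWcl, hWlo, hWhi⟩ := ih (by omega)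
      -- find a vertex outside W
      have hlt : W.card < Fintype.card V := by
        have h1 : 2 * a * k ≤ 2 * a * a := Nat.mul_le_mul_left _ (by omega)
        omega
      have : ∃ v : V, v ∉ W := by
        by_contra hv
        push_neg at hv
        have : Finset.univ ⊆ W := fun x _ => hv x
        have := Finset.card_le_card this
        rw [Finset.card_univ] at this
        omega
      obtain ⟨v, hv⟩ := this
      obtain ⟨C, hvC, hCcl, hCreach, hfour, hChi⟩ := h v
      have hdisj : Disjoint W C := by
        rw [Finset.disjoint_left]
        intro u huW huC
        exact hv (closed_reach G hWcl huW ((hCreach u huC).symm))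
      refine ⟨W ∪ C, ?_, ?_, ?_⟩
      · intro x hx y hxy
        rcases Finset.mem_union.mp hx with hx | hx
        · exact Finset.mem_union_left _ (hWcl x hx y hxy)
        · exact Finset.mem_union_right _ (hCcl x hx y hxy)
      · rw [Finset.card_union_of_disjoint hdisj]
        omega
      · rw [Finset.card_union_of_disjoint hdisj]
        have : 2 * a * (k + 1) = 2 * a * k + 2 * a := by ring
        omega
  exact key a le_rfl

end CubicAux

open CubicAux in
/-- For every positive integer `a` there are a constant `b > 0` and `n₀` such
that every cubic simple graph on `n ≥ n₀` vertices has a set `W` of at most `b·log n` vertices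
spanning at least `|W| + a` edges. -/
theorem cubic_graph_dense_small_set (a : ℕ) (ha : 0 < a) :
    ∃ (b : ℝ) (n₀ : ℕ), 0 < b ∧
      ∀ (V : Type) [Fintype V] [DecidableEq V] (G : SimpleGraph V) [DecidableRel G.Adj],
        n₀ ≤ Fintype.card V → (∀ v : V, G.degree v = 3) →
        ∃ W : Finset V, (W.card : ℝ) ≤ b * Real.log (Fintype.card V) ∧
          W.card + a ≤ (G.edgeFinset.filter (fun e => ∀ x ∈ e, x ∈ W)).card := by
  refine ⟨(16 * a + 18 : ℝ), 2 ^ (20 * (a + 1) ^ 2), by positivity, ?_⟩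
  intro V _ _ G _ hn hdeg
  have hn0 : (2 : ℕ) ^ (20 * (a + 1) ^ 2) ≤ Fintype.card V := hn
  set n := Fintype.card V with hncard
  have hexp_big : 20 * (a + 1) ^ 2 < 2 ^ (20 * (a + 1) ^ 2) := Nat.lt_two_pow_self
  have hn2 : 2 ≤ n := by
    refine le_trans ?_ hn0
    calc 2 = 2 ^ 1 := by norm_num
      _ ≤ 2 ^ (20 * (a + 1) ^ 2) := Nat.pow_le_pow_right (by norm_num) (by nlinarith)
  have ha1 : (1 : ℝ) ≤ (a : ℝ) := by exact_mod_cast ha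
  have hlog2 : (0.6931471803 : ℝ) < Real.log 2 := Real.log_two_gt_d9
  have hlogn0 : (0 : ℝ) ≤ Real.log n := Real.log_natCast_nonneg n
  -- lower bound on log n
  have hlogn_ge : 10 * ((a : ℝ) + 1) ^ 2 ≤ Real.log n := by
    have h1 : ((2 : ℝ) ^ (20 * (a + 1) ^ 2) : ℝ) ≤ (n : ℝ) := by exact_mod_cast hn0
    have h2 : Real.log ((2 : ℝ) ^ (20 * (a + 1) ^ 2)) ≤ Real.log n :=
      Real.log_le_log (by positivity) h1
    rw [Real.log_pow] at h2
    have h3 : ((20 * (a + 1) ^ 2 : ℕ) : ℝ) = 20 * ((a : ℝ) + 1) ^ 2 := by push_cast; ring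
    rw [h3] at h2
    have h4 : 10 * ((a : ℝ) + 1) ^ 2 ≤ 20 * ((a : ℝ) + 1) ^ 2 * Real.log 2 := by
      linarith only [mul_le_mul_of_nonneg_left hlog2.le (sq_nonneg ((a : ℝ) + 1)), sq_nonneg ((a : ℝ) + 1)]
    linarith
  -- upper bound on Nat.log
  set L := Nat.log 2 n with hLdef
  have hL2 : ((L : ℕ) : ℝ) ≤ 2 * Real.log n := by
    have h1 : (2 : ℕ) ^ L ≤ n := Nat.pow_log_le_self 2 (by omega)
    have h2 : ((2 : ℝ)) ^ L ≤ (n : ℝ) := by exact_mod_cast h1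
    have h3 : Real.log ((2 : ℝ) ^ L) ≤ Real.log n := Real.log_le_log (by positivity) h2
    rw [Real.log_pow] at h3
    have h4 : (0 : ℝ) ≤ ((L : ℕ) : ℝ) := Nat.cast_nonneg L
    linarith only [h3, mul_le_mul_of_nonneg_left hlog2.le h4, h4, hlogn0]
  set R := 4 * a + 4 * (L + 1) with hRdef
  by_cases hsucc : ∃ v : V, ∃ r, r ≤ R ∧
      (ball G v r).card + a ≤ (spanned G (ball G v r)).card
  · -- Case A: a good ball exists
    obtain ⟨v, r, hrR, hsu⟩ := hsucc
    obtain ⟨W, hW1, hW2⟩ := caseA G a v r hsu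
    refine ⟨W, ?_, hW2⟩
    have h1 : (W.card : ℝ) ≤ ((a : ℝ) + 1) * (2 * ((r : ℝ) + 1)) := by exact_mod_cast hW1
    have hr' : (r : ℝ) ≤ 4 * (a : ℝ) + 4 * ((L : ℝ) + 1) := by exact_mod_cast hrR
    have hp1 : (0 : ℝ) ≤ 2 * ((a : ℝ) + 1) := by positivity
    have k0 := mul_le_mul_of_nonneg_left hr' hp1
    have k2 : (W.card : ℝ) ≤ ((a : ℝ) + 1) * (8 * (a : ℝ) + 10) + 8 * ((a : ℝ) + 1) * (L : ℝ) := by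
      linarith only [h1, k0]
    have hp2 : (0 : ℝ) ≤ 8 * ((a : ℝ) + 1) := by positivity
    have k1 := mul_le_mul_of_nonneg_left hL2 hp2
    have k3 : ((a : ℝ) + 1) * (8 * (a : ℝ) + 10) ≤ 10 * ((a : ℝ) + 1) ^ 2 := by linarith only [ha1, sq_nonneg (a : ℝ)]
    linarith only [hlogn_ge, hlogn0, k1, k2, k3]
  · -- Case B: all balls are poor, so all components are tiny
    push_neg at hsucc
    have hv : ∀ v : V, ∃ C : Finset V, v ∈ C ∧ Closed G C ∧ (∀ u ∈ C, G.Reachable v u) ∧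
        4 ≤ C.card ∧ C.card ≤ 2 * a := by
      intro v
      obtain ⟨r, hrR, hstab⟩ := stabilize G hdeg a ha v (fun r hr => hsucc v r hr)
      have hcl : Closed G (ball G v r) := closed_of_stable G hstab
      have hh := handshake_closed G hdeg hcl
      have hf := hsucc v r (le_of_lt hrR)
      exact ⟨ball G v r, v_mem_ball G v r, hcl, fun u hu => ((mem_ball G).mp hu).1,
        four_le_card_closed G hdeg (v_mem_ball G v r) hcl, by omega⟩
    have hbig : 2 * a * a < n := by
      have h1 : 2 * a * a ≤ 20 * (a + 1) ^ 2 := by linarith only [Nat.zero_le a, Nat.zero_le (a * a)]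
      omega
    obtain ⟨W, hWcl, hWlo, hWhi⟩ := greedy G a ha hv hbig
    have hh := handshake_closed G hdeg hWcl
    have hcount : W.card + a ≤ (spanned G W).card := by
      have h2 : 2 * (W.card + a) ≤ 2 * (spanned G W).card := by
        rw [hh]
        omega
      omega
    refine ⟨W, ?_, hcount⟩
    have h1 : (W.card : ℝ) ≤ 2 * (a : ℝ) * (a : ℝ) := by exact_mod_cast hWhi
    linarith only [h1, hlogn_ge, hlogn0, ha1, mul_nonneg (Nat.cast_nonneg a : (0 : ℝ) ≤ a) hlogn0, sq_nonneg (a : ℝ)]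
end
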